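/- arXiv:2502.03345 — 6 statements merged into one kernel-verified Lean document; each statement's English description precedes it below -/
import Mathlib

section
/- For n = 3, the sequences a_r, b_r, c_r satisfy: if r ≡ 0 mod 6 then a_r = b_r + 1 = c_r + 1; if r ≡ 1 mod 6 then c_r = a_r - 1 = b_r - 1; if r ≡ 2 mod 6 then b_r = a_r + 1 = c_r + 1; if r ≡ 3 mod 6 then a_r = b_r - 1 = c_r - 1; if r ≡ 4 mod 6 then c_r = a_r + 1 = b_r + 1; if r ≡ 5 mod 6 then b_r = a_r - 1 = c_r - 1. -/
/-- The `n = 3` Ducci coefficient triple `(a_r, b_r, c_r)`. -/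
def abc : ℕ → ℤ × ℤ × ℤ
  | 0 => (1, 0, 0)
  | r + 1 => ((abc r).1 + (abc r).2.2, (abc r).2.1 + (abc r).1, (abc r).2.2 + (abc r).2.1)

def A (r : ℕ) : ℤ := (abc r).1
def B (r : ℕ) : ℤ := (abc r).2.1
def C (r : ℕ) : ℤ := (abc r).2.2

theorem abc_mod_six (r : ℕ) :
    (r % 6 = 0 → A r = B r + 1 ∧ A r = C r + 1) ∧
    (r % 6 = 1 → C r = A r - 1 ∧ C r = B r - 1) ∧
    (r % 6 = 2 → B r = A r + 1 ∧ B r = C r + 1) ∧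
    (r % 6 = 3 → A r = B r - 1 ∧ A r = C r - 1) ∧
    (r % 6 = 4 → C r = A r + 1 ∧ C r = B r + 1) ∧
    (r % 6 = 5 → B r = A r - 1 ∧ B r = C r - 1) := by
  induction r with
  | zero => simp [A, B, C, abc]
  | succ n ih =>
    obtain ⟨h0, h1, h2, h3, h4, h5⟩ := ih
    have hA : A (n + 1) = A n + C n := rfl
    have hB : B (n + 1) = B n + A n := rfl
    have hC : C (n + 1) = C n + B n := rfl
    have hlt : n % 6 < 6 := Nat.mod_lt _ (by norm_num)
    have hs : (n + 1) % 6 = (n % 6 + 1) % 6 := by omega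
    interval_cases hn : n % 6 <;>
      [specialize h0 rfl; specialize h1 rfl; specialize h2 rfl;
       specialize h3 rfl; specialize h4 rfl; specialize h5 rfl] <;>
      refine ⟨?_, ?_, ?_, ?_, ?_, ?_⟩ <;> intro h <;> omega
end

section
/- Let m be a prime with m ≡ 5 mod 6, and n = 3. Then modulo m: a_{m-1} ≡ 0, b_{m-1} ≡ 0, and c_{m-1} ≡ 1. Consequently D^{m-1}(x_1,x_2,x_3) = (x_3,x_1,x_2) = H^2(x_1,x_2,x_3) for every (x_1,x_2,x_3) ∈ (Z/mZ)^3. -/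
/-- The Ducci map on `(ZMod m)^3`. -/
def D (m : ℕ) (u : Fin 3 → ZMod m) : Fin 3 → ZMod m :=
  fun i => u i + u (i + 1)

/-- The cyclic left shift on `(ZMod m)^3`. -/
def H (m : ℕ) (u : Fin 3 → ZMod m) : Fin 3 → ZMod m :=
  fun i => u (i + 1)

lemma A_succ (r : ℕ) : A (r + 1) = A r + C r := rfl
lemma B_succ (r : ℕ) : B (r + 1) = B r + A r := rfl
lemma C_succ (r : ℕ) : C (r + 1) = C r + B r := rfl

/-- cyclic shift matrix -/
def P (m : ℕ) : Matrix (Fin 3) (Fin 3) (ZMod m) :=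
  Matrix.of ![![0,1,0],![0,0,1],![1,0,0]]

lemma pow_matrix (m : ℕ) (r : ℕ) :
    (1 + P m)^r = Matrix.of ![![(A r : ZMod m), B r, C r],
      ![(C r : ZMod m), A r, B r], ![(B r : ZMod m), C r, A r]] := by
  induction r with
  | zero =>
      ext i j
      fin_cases i <;> fin_cases j <;>
        simp [A, B, C, abc, Matrix.one_apply, Matrix.vecHead, Matrix.vecTail]
  | succ r ih =>
      rw [pow_succ, ih]
      ext i j
      fin_cases i <;> fin_cases j <;>
        simp [P, Matrix.mul_apply, Fin.sum_univ_three, A_succ, B_succ, C_succ, Matrix.vecHead, Matrix.vecTail] <;>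
        push_cast <;> ring

lemma P_cube (m : ℕ) : (P m)^3 = 1 := by
  ext i j
  fin_cases i <;> fin_cases j <;>
    simp [P, pow_succ, Matrix.mul_apply, Fin.sum_univ_three, Matrix.one_apply, Matrix.vecHead, Matrix.vecTail]

lemma Dpow (m : ℕ) (r : ℕ) (u : Fin 3 → ZMod m) (i : Fin 3) :
    (D m)^[r] u i = (A r : ZMod m) * u i + (B r : ZMod m) * u (i + 1)
      + (C r : ZMod m) * u (i + 2) := by
  induction r generalizing i with
  | zero => simp [A, B, C, abc]
  | succ r ih =>
      rw [Function.iterate_succ_apply']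
      show (D m)^[r] u i + (D m)^[r] u (i+1) = _
      rw [ih i, ih (i + 1)]
      have h1 : i + 1 + 1 = i + 2 := by rw [add_assoc]; norm_num; decide
      have h2 : i + 1 + 2 = i := by
        have : (1 : Fin 3) + 2 = 0 := by decide
        rw [add_assoc, this, add_zero]
      rw [h1, h2, A_succ, B_succ, C_succ]
      push_cast
      ring

theorem prime_five_mod_six (m : ℕ) (hm : m.Prime) (h5 : m % 6 = 5) :
    ((A (m - 1) : ZMod m) = 0 ∧ (B (m - 1) : ZMod m) = 0 ∧ (C (m - 1) : ZMod m) = 1) ∧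
    ∀ u : Fin 3 → ZMod m, (D m)^[m - 1] u = (H m)^[2] u := by
  haveI : Fact m.Prime := ⟨hm⟩
  have hm5 : 5 ≤ m := by omega
  have hm1 : 1 ≤ m := by omega
  -- P^m = P^2
  have h3 : m % 3 = 2 := by omega
  have hPm : (P m)^m = (P m)^2 := by
    have hE : m = 3 * (m / 3) + 2 := by omega
    calc (P m)^m = (P m)^(3*(m/3)+2) := by rw [← hE]
    _ = ((P m)^3)^(m/3) * (P m)^2 := by rw [pow_add, pow_mul]
    _ = (P m)^2 := by rw [P_cube, one_pow, one_mul]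
  -- Frobenius
  have hfrob : (1 + P m)^m = 1 + (P m)^2 := by
    rw [add_pow_char_of_commute m (Commute.one_left (P m)), one_pow, hPm]
  -- det (1 + P m) = 2
  have hmat : (1 : Matrix (Fin 3) (Fin 3) (ZMod m)) + P m
      = Matrix.of ![![1,1,0],![0,1,1],![1,0,1]] := by
    ext i j
    fin_cases i <;> fin_cases j <;> simp [P, Matrix.one_apply, Matrix.vecHead, Matrix.vecTail]
  have hdet : IsUnit (1 + P m).det := by
    rw [hmat]
    have : (Matrix.of ![![(1:ZMod m),1,0],![0,1,1],![1,0,1]]).det = 2 := by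
      rw [Matrix.det_fin_three]; simp; norm_num
    rw [this]
    have h2 : ((2 : ℕ) : ZMod m) ≠ 0 := by
      rw [Ne, ZMod.natCast_eq_zero_iff]
      intro hd
      have := Nat.le_of_dvd (by norm_num) hd
      omega
    exact isUnit_iff_ne_zero.mpr (by exact_mod_cast h2)
  -- cancel
  have key : (1 + P m)^(m - 1) = (P m)^2 := by
    have h1 : (1 + P m)^(m - 1) * (1 + P m) = (P m)^2 * (1 + P m) := by
      rw [← pow_succ, Nat.sub_add_cancel hm1, hfrob, mul_add, mul_one,
        ← pow_succ, P_cube, add_comm]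
    have := congrArg (· * (1 + P m)⁻¹) h1
    simpa [Matrix.mul_assoc, Matrix.mul_nonsing_inv _ hdet] using this
  rw [pow_matrix] at key
  have hA : (A (m - 1) : ZMod m) = 0 := by
    have := congrFun (congrFun key 0) 0
    simpa [P, pow_succ, Matrix.mul_apply, Fin.sum_univ_three, Matrix.vecHead, Matrix.vecTail] using this
  have hB : (B (m - 1) : ZMod m) = 0 := by
    have := congrFun (congrFun key 0) 1
    simpa [P, pow_succ, Matrix.mul_apply, Fin.sum_univ_three, Matrix.vecHead, Matrix.vecTail] using this
  have hC : (C (m - 1) : ZMod m) = 1 := by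
    have := congrFun (congrFun key 0) 2
    simpa [P, pow_succ, Matrix.mul_apply, Fin.sum_univ_three, Matrix.vecHead, Matrix.vecTail] using this
  refine ⟨⟨hA, hB, hC⟩, fun u => ?_⟩
  funext i
  rw [Dpow, hA, hB, hC]
  simp [H, Function.iterate_succ_apply', add_assoc]
end

section
/- Let m = 2^l with l ≥ 1 and n = 3. Then a_{l+2} ≡ c_l, b_{l+2} ≡ a_l, and c_{l+2} ≡ b_l, all modulo 2^l. -/
lemma key (l : ℕ) : A (l + 2) = C l + 2 ^ l ∧ B (l + 2) = A l + 2 ^ l ∧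
    C (l + 2) = B l + 2 ^ l := by
  induction l with
  | zero => refine ⟨?_, ?_, ?_⟩ <;> simp [A, B, C, abc]
  | succ n ih =>
    obtain ⟨h1, h2, h3⟩ := ih
    refine ⟨?_, ?_, ?_⟩
    · rw [show n + 1 + 2 = (n + 2) + 1 from rfl, A_succ, h1, h3, C_succ]; ring
    · rw [show n + 1 + 2 = (n + 2) + 1 from rfl, B_succ, h2, h1, A_succ]; ring
    · rw [show n + 1 + 2 = (n + 2) + 1 from rfl, C_succ, h3, h2, B_succ]; ring

theorem abc_two_pow (l : ℕ) (hl : 1 ≤ l) :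
    (A (l + 2) : ZMod (2 ^ l)) = (C l : ZMod (2 ^ l)) ∧
    (B (l + 2) : ZMod (2 ^ l)) = (A l : ZMod (2 ^ l)) ∧
    (C (l + 2) : ZMod (2 ^ l)) = (B l : ZMod (2 ^ l)) := by
  obtain ⟨h1, h2, h3⟩ := key l
  have hz : ((2 ^ l : ℤ) : ZMod (2 ^ l)) = 0 := by
    have := ZMod.natCast_self (2 ^ l)
    push_cast at this ⊢
    exact this
  refine ⟨?_, ?_, ?_⟩ <;> [rw [h1]; rw [h2]; rw [h3]] <;> push_cast <;>
    push_cast at hz <;> rw [hz] <;> ring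
end

section
/- Let m = 2^l · p where l ≥ 1 and p is prime with p ≡ 5 mod 6, and n = 3. Then a_{l+p-1} ≡ b_l, b_{l+p-1} ≡ c_l, and c_{l+p-1} ≡ a_l, all modulo m. -/
/-- `T k = (4^k - 1)/3`. -/
def T : ℕ → ℤ
  | 0 => 0
  | k + 1 => 4 * T k + 1

lemma three_T (k : ℕ) : 3 * T k = 4 ^ k - 1 := by
  induction k with
  | zero => simp [T]
  | succ k ih => simp [T, pow_succ]; ring_nf; ring_nf at ih; linarith

lemma T_add (j k : ℕ) : T (j + k) = T j + 4 ^ j * T k := by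
  induction j with
  | zero => simp [T]
  | succ j ih =>
    have : j + 1 + k = (j + k) + 1 := by omega
    rw [this]
    simp only [T, ih, pow_succ]
    ring

lemma abc_even (k : ℕ) : abc (2 * k) =
    ((if k % 3 = 0 then 1 else 0) + T k,
     (if k % 3 = 1 then 1 else 0) + T k,
     (if k % 3 = 2 then 1 else 0) + T k) := by
  induction k with
  | zero => simp [abc, T]
  | succ k ih =>
    have h2 : 2 * (k + 1) = (2 * k) + 1 + 1 := by omega
    rw [h2]
    simp only [abc, ih]
    have h3 : k % 3 = 0 ∨ k % 3 = 1 ∨ k % 3 = 2 := by omega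
    rcases h3 with h | h | h <;>
      · have h4 : (k + 1) % 3 = (k % 3 + 1) % 3 := by omega
        simp [h, h4, T] <;> ring_nf <;> constructorm* _ ∧ _ <;> trivial

lemma abc_odd (k : ℕ) : abc (2 * k + 1) =
    ((if k % 3 = 0 then 1 else 0) + (if k % 3 = 2 then 1 else 0) + 2 * T k,
     (if k % 3 = 0 then 1 else 0) + (if k % 3 = 1 then 1 else 0) + 2 * T k,
     (if k % 3 = 1 then 1 else 0) + (if k % 3 = 2 then 1 else 0) + 2 * T k) := by
  rw [show abc (2 * k + 1) = ((abc (2*k)).1 + (abc (2*k)).2.2, (abc (2*k)).2.1 + (abc (2*k)).1,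
      (abc (2*k)).2.2 + (abc (2*k)).2.1) from rfl, abc_even]
  simp only [Prod.mk.injEq]
  constructorm* _ ∧ _ <;> ring1

lemma diff (l k : ℕ) (hk : k % 3 = 2) :
    A (l + 2 * k) = B l + 2 ^ l * T k ∧
    B (l + 2 * k) = C l + 2 ^ l * T k ∧
    C (l + 2 * k) = A l + 2 ^ l * T k := by
  have h3 : l % 2 = 0 ∨ l % 2 = 1 := by omega
  rcases h3 with h | h
  · obtain ⟨j, rfl⟩ : ∃ j, l = 2 * j := ⟨l / 2, by omega⟩
    have he : 2 * j + 2 * k = 2 * (j + k) := by ring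
    rw [he]
    simp only [A, B, C, abc_even, T_add]
    have hpow : (2 : ℤ) ^ (2 * j) = 4 ^ j := by rw [pow_mul]; norm_num
    have hj : j % 3 = 0 ∨ j % 3 = 1 ∨ j % 3 = 2 := by omega
    rcases hj with hj | hj | hj <;>
      · have h1 : (j + k) % 3 = (j % 3 + 2) % 3 := by omega
        simp [hj, h1, hpow] <;> ring
  · obtain ⟨j, rfl⟩ : ∃ j, l = 2 * j + 1 := ⟨l / 2, by omega⟩
    have he : 2 * j + 1 + 2 * k = 2 * (j + k) + 1 := by ring
    rw [he]
    simp only [A, B, C, abc_odd, T_add]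
    have hpow : (2 : ℤ) ^ (2 * j + 1) = 2 * 4 ^ j := by rw [pow_succ, pow_mul]; ring
    have hj : j % 3 = 0 ∨ j % 3 = 1 ∨ j % 3 = 2 := by omega
    rcases hj with hj | hj | hj <;>
      · have h1 : (j + k) % 3 = (j % 3 + 2) % 3 := by omega
        simp [hj, h1, hpow] <;> constructorm* _ ∧ _ <;> (first | trivial | ring1)

theorem abc_two_pow_mul_prime (l p : ℕ) (hl : 1 ≤ l) (hp : p.Prime) (h5 : p % 6 = 5) :
    (A (l + p - 1) : ZMod (2 ^ l * p)) = (B l : ZMod (2 ^ l * p)) ∧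
    (B (l + p - 1) : ZMod (2 ^ l * p)) = (C l : ZMod (2 ^ l * p)) ∧
    (C (l + p - 1) : ZMod (2 ^ l * p)) = (A l : ZMod (2 ^ l * p)) := by
  set k := (p - 1) / 2 with hkdef
  have hp5 : 5 ≤ p := by omega
  have hpk : p = 2 * k + 1 := by omega
  have hk3 : k % 3 = 2 := by omega
  have hr : l + p - 1 = l + 2 * k := by omega
  -- p ∣ T k
  haveI : Fact p.Prime := ⟨hp⟩
  have h2ne : (2 : ZMod p) ≠ 0 := by
    intro h
    have : (p : ℤ) ∣ 2 := by
      have : ((2 : ℤ) : ZMod p) = 0 := by push_cast; exact h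
      exact (ZMod.intCast_zmod_eq_zero_iff_dvd 2 p).mp this
    have := Int.le_of_dvd (by norm_num) this
    omega
  have hferm : (2 : ZMod p) ^ (p - 1) = 1 := ZMod.pow_card_sub_one_eq_one h2ne
  have hdvd41 : (p : ℤ) ∣ 4 ^ k - 1 := by
    rw [← ZMod.intCast_zmod_eq_zero_iff_dvd]
    push_cast
    have h4 : (4 : ZMod p) = 2 ^ 2 := by norm_num
    rw [h4, ← pow_mul]
    have : 2 * k = p - 1 := by omega
    rw [this, hferm]
    ring
  have hpT : (p : ℤ) ∣ T k := by
    have h3T : (p : ℤ) ∣ 3 * T k := by rw [three_T]; exact hdvd41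
    have hp3 : ¬ (p : ℤ) ∣ 3 := by
      intro h
      have := Int.le_of_dvd (by norm_num) h
      omega
    exact (Int.Prime.dvd_mul' (by exact_mod_cast hp) h3T).resolve_left hp3
  obtain ⟨t, ht⟩ := hpT
  have hmdvd : ∀ x y : ℤ, x = y + 2 ^ l * T k →
      ((x : ZMod (2 ^ l * p)) = (y : ZMod (2 ^ l * p))) := by
    intro x y hxy
    rw [ZMod.intCast_eq_intCast_iff]
    have hd : ((2 ^ l * p : ℕ) : ℤ) ∣ x - y := by
      refine ⟨t, ?_⟩
      rw [hxy, ht]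
      push_cast
      ring
    exact (Int.modEq_iff_dvd.mpr hd).symm
  obtain ⟨h1, h2, h3⟩ := diff l k hk3
  rw [hr]
  exact ⟨hmdvd _ _ h1, hmdvd _ _ h2, hmdvd _ _ h3⟩
end

section
/- Let p be a prime with p ≡ 5 mod 6. Then p divides b_{p-1}, where b_r is from the n = 3 Ducci coefficient sequences. -/
lemma abc_sum (r : ℕ) : A r + B r + C r = 2 ^ r := by
  induction r with
  | zero => simp [A, B, C, abc]
  | succ n ih =>
    simp only [A, B, C, abc] at *
    ring_nf
    ring_nf at ih
    linarith

lemma abc_period (r : ℕ) :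
    A (r + 6) - B (r + 6) = A r - B r ∧ C (r + 6) - B (r + 6) = C r - B r := by
  simp only [A, B, C, show r + 6 = r+1+1+1+1+1+1 by ring, abc]
  constructor <;> ring

lemma abc_at (k : ℕ) :
    A (6 * k + 4) - B (6 * k + 4) = 0 ∧ C (6 * k + 4) - B (6 * k + 4) = 1 := by
  induction k with
  | zero => norm_num [A, B, C, show (4:ℕ) = 0+1+1+1+1 by ring, abc]
  | succ n ih =>
    have h := abc_period (6 * n + 4)
    have e : 6 * (n + 1) + 4 = 6 * n + 4 + 6 := by ring
    rw [e]
    omega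

theorem prime_dvd_b (p : ℕ) (hp : p.Prime) (h5 : p % 6 = 5) : (p : ℤ) ∣ B (p - 1) := by
  have hp5 : 5 ≤ p := by omega
  obtain ⟨k, hk⟩ : ∃ k, p - 1 = 6 * k + 4 := ⟨(p - 5) / 6, by omega⟩
  have hsum := abc_sum (p - 1)
  have hat := abc_at k
  rw [← hk] at hat
  -- 3 * B (p-1) = 2^(p-1) - 1
  have h3 : 3 * B (p - 1) = 2 ^ (p - 1) - 1 := by
    have := hat.1; have := hat.2; linarith
  have hp2 : p ≠ 2 := by omega
  have : (p : ℤ) ∣ 2 ^ (p - 1) - 1 := by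
    haveI : Fact p.Prime := ⟨hp⟩
    have h2 : (2 : ZMod p) ≠ 0 := by
      intro h
      have : ((2 : ℕ) : ZMod p) = 0 := by exact_mod_cast h
      rw [ZMod.natCast_eq_zero_iff] at this
      have := Nat.le_of_dvd (by norm_num) this
      have := hp.two_le
      omega
    have hfl := ZMod.pow_card_sub_one_eq_one h2
    have : ((2 ^ (p - 1) - 1 : ℤ) : ZMod p) = 0 := by
      push_cast
      rw [hfl]; ring
    exact (ZMod.intCast_zmod_eq_zero_iff_dvd _ _).mp this
  rw [← h3] at this
  have h3p : ¬ (p : ℤ) ∣ 3 := by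
    intro h
    have hd : p ∣ 3 := by exact_mod_cast h
    have := Nat.le_of_dvd (by norm_num) hd
    omega
  rcases (Int.Prime.dvd_mul' hp this) with h | h
  · exact absurd (by exact_mod_cast h) h3p
  · exact h
end

section
/- Let n ≥ 2 and let m = δn - 1 be prime for some δ ≥ 1. Then modulo m, a_{m,s} ≡ 1 if s ≡ 1 mod n or s ≡ 0 mod n, and a_{m,s} ≡ 0 otherwise (for 1 ≤ s ≤ n). -/
/-- The Ducci coefficients `a_{r,s}`, with `s` taken modulo `n`. -/
def a (n : ℕ) : ℕ → ZMod n → ℤ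
  | 0, s => if s = 1 then 1 else 0
  | r + 1, s => a n r s + a n r (s - 1)

lemma a_eq_sum (n : ℕ) (r : ℕ) (s : ZMod n) :
    a n r s = ∑ i ∈ Finset.range (r+1),
      if ((i : ZMod n) + 1 = s) then (r.choose i : ℤ) else 0 := by
  induction r generalizing s with
  | zero =>
    simp only [a, Finset.sum_range_one, Nat.choose_zero_right, Nat.cast_zero, Nat.cast_one,
      zero_add]
    by_cases h : s = 1 <;> simp [h, eq_comm]
  | succ r ih =>
    have hrec : a n (r+1) s = a n r s + a n r (s-1) := rfl
    rw [hrec, ih s, ih (s-1)]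
    rw [Finset.sum_range_succ'
      (f := fun i => if ((i : ZMod n) + 1 = s) then (((r+1).choose i : ℕ) : ℤ) else 0) (r+1)]
    have hsplit : ∀ i : ℕ,
        (if (((i+1 : ℕ) : ZMod n) + 1 = s) then (((r+1).choose (i+1) : ℕ) : ℤ) else 0)
        = (if ((i : ZMod n) + 1 = s - 1) then ((r.choose i : ℕ) : ℤ) else 0)
          + (if (((i+1 : ℕ) : ZMod n) + 1 = s) then ((r.choose (i+1) : ℕ) : ℤ) else 0) := by
      intro i
      have hcond : (((i+1 : ℕ) : ZMod n) + 1 = s) ↔ ((i : ZMod n) + 1 = s - 1) := by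
        push_cast
        constructor <;> intro h <;> [skip; skip] <;> linear_combination h
      have hch : (((r+1).choose (i+1) : ℕ) : ℤ) = (r.choose i : ℤ) + (r.choose (i+1) : ℤ) := by
        rw [Nat.choose_succ_succ]; push_cast; ring
      by_cases h : ((i : ZMod n) + 1 = s - 1)
      · rw [if_pos (hcond.mpr h), if_pos h, if_pos (hcond.mpr h), hch]
      · rw [if_neg (fun hh => h (hcond.mp hh)), if_neg h,
          if_neg (fun hh => h (hcond.mp hh)), add_zero]
    rw [Finset.sum_congr rfl (fun i _ => hsplit i), Finset.sum_add_distrib]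
    have hA : (∑ i ∈ Finset.range (r+1),
        if ((i : ZMod n) + 1 = s) then (r.choose i : ℤ) else 0)
        = (∑ i ∈ Finset.range (r+1),
            if (((i+1 : ℕ) : ZMod n) + 1 = s) then ((r.choose (i+1) : ℕ) : ℤ) else 0)
          + (if ((0 : ZMod n) + 1 = s) then ((r+1).choose 0 : ℤ) else 0) := by
      rw [Finset.sum_range_succ
        (f := fun i => if (((i+1 : ℕ) : ZMod n) + 1 = s) then ((r.choose (i+1) : ℕ) : ℤ) else 0)]
      rw [Nat.choose_succ_self, Finset.sum_range_succ'
        (f := fun i => if ((i : ZMod n) + 1 = s) then ((r.choose i : ℕ) : ℤ) else 0)]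
      simp
    rw [hA]
    push_cast
    ring

theorem a_m_mod_prime (n δ m : ℕ) [NeZero n] (hn : 2 ≤ n) (hδ : 1 ≤ δ)
    (hm : m = δ * n - 1) (hmp : m.Prime) (s : ℕ) (hs1 : 1 ≤ s) (hsn : s ≤ n) :
    (a n m (s : ZMod n) : ZMod m) = if s % n = 1 ∨ s % n = 0 then 1 else 0 := by
  have hm1 : m + 1 = δ * n := by
    have : 1 ≤ δ * n := le_trans hs1 (le_trans hsn (Nat.le_mul_of_pos_left n hδ))
    omega
  have h2m : 2 ≤ m := hmp.two_le
  rw [a_eq_sum]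
  push_cast
  -- peel off last term (i = m) and first term (i = 0); all middle terms vanish mod m
  obtain ⟨k, hk⟩ : ∃ k, m = k + 1 := ⟨m - 1, by omega⟩
  rw [Finset.sum_range_succ, hk, Finset.sum_range_succ'
    (f := fun i => if ((i : ZMod n) + 1 = (s : ZMod n)) then (((k+1).choose i : ℕ) : ZMod (k+1)) else 0)]
  have hmid : ∀ i ∈ Finset.range k,
      (if (((i+1 : ℕ) : ZMod n) + 1 = (s : ZMod n)) then (((k+1).choose (i+1) : ℕ) : ZMod (k+1)) else 0) = 0 := by
    intro i hi
    have hlt : i + 1 < k + 1 := by simpa using Finset.mem_range.mp hi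
    have hdvd : (k+1) ∣ (k+1).choose (i+1) := by
      rw [← hk] at hlt ⊢
      exact hmp.dvd_choose_self (Nat.succ_ne_zero i) hlt
    have : (((k+1).choose (i+1) : ℕ) : ZMod (k+1)) = 0 :=
      (ZMod.natCast_eq_zero_iff _ _).mpr hdvd
    rw [this, ite_self]
  rw [Finset.sum_congr rfl hmid, Finset.sum_const_zero, zero_add]
  rw [Nat.choose_zero_right, Nat.choose_self]
  have hmzero : (((k+1 : ℕ) : ZMod n) + 1 : ZMod n) = 0 := by
    have : (((k+1) + 1 : ℕ) : ZMod n) = ((δ * n : ℕ) : ZMod n) := by rw [← hk, hm1]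
    push_cast at this
    simpa using this
  rw [hmzero]
  simp only [Nat.cast_zero, Nat.cast_one, zero_add]
  have hfact : Fact (1 < n) := ⟨hn⟩
  have hcond1 : ((1 : ZMod n) = (s : ZMod n)) ↔ s = 1 := by
    constructor
    · intro h
      rcases lt_or_eq_of_le hsn with hlt | heq
      · have hval : ((s : ℕ) : ZMod n).val = s := ZMod.val_natCast_of_lt hlt
        rw [← h, ZMod.val_one] at hval
        omega
      · subst heq
        rw [ZMod.natCast_self] at h
        exact absurd h one_ne_zero
    · intro h; rw [h]; simp
  have hcond0 : ((0 : ZMod n) = (s : ZMod n)) ↔ s = n := by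
    constructor
    · intro h
      rcases lt_or_eq_of_le hsn with hlt | heq
      · have hval : ((s : ℕ) : ZMod n).val = s := ZMod.val_natCast_of_lt hlt
        rw [← h, ZMod.val_zero] at hval
        omega
      · exact heq
    · intro h; rw [h, ZMod.natCast_self]
  by_cases h1 : s = 1
  · have h0 : ¬ ((0 : ZMod n) = (s : ZMod n)) := by
      intro h
      have h2 := hcond0.mp h
      rw [h1] at h2
      omega
    rw [if_pos (hcond1.mpr h1), if_neg h0, add_zero]
    have : s % n = 1 := by rw [h1]; exact Nat.mod_eq_of_lt hn
    simp [this]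
  · by_cases h0 : s = n
    · have h1' : ¬ ((1 : ZMod n) = (s : ZMod n)) := fun h => h1 (hcond1.mp h)
      rw [if_neg h1', if_pos (hcond0.mpr h0), zero_add]
      have : s % n = 0 := by rw [h0]; exact Nat.mod_self n
      simp [this]
    · have h1' : ¬ ((1 : ZMod n) = (s : ZMod n)) := fun h => h1 (hcond1.mp h)
      have h0' : ¬ ((0 : ZMod n) = (s : ZMod n)) := fun h => h0 (hcond0.mp h)
      rw [if_neg h1', if_neg h0', add_zero]
      have hmod : s % n = s := Nat.mod_eq_of_lt (lt_of_le_of_ne hsn h0)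
      have : ¬ (s % n = 1 ∨ s % n = 0) := by rw [hmod]; push_neg; exact ⟨h1, by omega⟩
      rw [if_neg this]
end
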